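/- For every h ∈ E there exist f ∈ M and g ∈ S such that h = g ∘ f; that is, every order-preserving map ℚ → ℚ factors as a surjective order-preserving map composed with a strictly order-preserving map. -/

import Mathlib

/-- **Lemma 3.3.** Every order-preserving map `h : ℚ → ℚ` factors as `h = g ∘ f` with
`f` strictly order-preserving (so `f ∈ M`) and `g` order-preserving and surjective
(so `g ∈ S`). -/
theorem factorization_through_M_and_S (h : ℚ → ℚ) (hh : Monotone h) :
    ∃ f g : ℚ → ℚ, StrictMono f ∧ Monotone g ∧ Function.Surjective g ∧ h = g ∘ f := by
  have : Countable (ℚ ×ₗ ℚ) := inferInstanceAs (Countable (ℚ × ℚ))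
  obtain ⟨e⟩ := Order.iso_of_countable_dense (ℚ ×ₗ ℚ) ℚ
  refine ⟨fun x => e (toLex (h x, x)), fun y => (ofLex (e.symm y)).1, ?_, ?_, ?_, ?_⟩
  · intro x y hxy
    apply e.strictMono
    rcases lt_or_eq_of_le (hh hxy.le) with hlt | heq
    · exact Prod.Lex.left _ _ hlt
    · rw [heq]; exact Prod.Lex.right _ hxy
  · intro a b hab
    have : e.symm a ≤ e.symm b := e.symm.monotone hab
    rcases Prod.Lex.le_iff.mp this with hlt | ⟨heq, _⟩
    · exact hlt.le
    · exact heq.le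
  · intro q
    exact ⟨e (toLex (q, 0)), by simp⟩
  · funext x; simp
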